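/- The pseudo-intersection number 𝔭 equals 𝔨wt, where 𝔨wt is the minimal cardinality of a centered family F ⊆ [ℕ]^∞ such that there is no infinite A ⊆ ℕ for which all sets in F∥A = {B ∩ A : B ∈ F} are infinite and F∥A is linearly quasiordered by ⊆*. -/

import Mathlib

open Cardinal Set

/-- `A` is almost contained in `B`: `A \ B` is finite. -/
def ASub (A B : Set ℕ) : Prop := (A \ B).Finite

/-- A family is linearly quasiordered by `⊆*`. -/
def LinQO (F : Set (Set ℕ)) : Prop := ∀ A ∈ F, ∀ B ∈ F, ASub A B ∨ ASub B A

/-- A centered family of infinite subsets of `ℕ`. -/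
def Centered (F : Set (Set ℕ)) : Prop :=
  (∀ A ∈ F, A.Infinite) ∧
  ∀ G : Finset (Set ℕ), ↑G ⊆ F → G.Nonempty → (⋂ A ∈ G, A).Infinite

/-- `A` is a pseudo-intersection of `F`. -/
def PseudoInt (F : Set (Set ℕ)) (A : Set ℕ) : Prop :=
  A.Infinite ∧ ∀ B ∈ F, ASub A B

/-- The pseudo-intersection number 𝔭. -/
noncomputable def pNum : Cardinal :=
  sInf {c | ∃ F : Set (Set ℕ), Centered F ∧ (¬∃ A, PseudoInt F A) ∧ c = #F}

/-- The tower number 𝔱. -/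
noncomputable def tNum : Cardinal :=
  sInf {c | ∃ F : Set (Set ℕ), (∀ A ∈ F, A.Infinite) ∧ LinQO F ∧
    (¬∃ A, PseudoInt F A) ∧ c = #F}

/-- Eventual dominance `f ≤* g`. -/
def LeStar (f g : ℕ → ℕ) : Prop := {n | g n < f n}.Finite

def UnboundedFam (B : Set (ℕ → ℕ)) : Prop := ¬∃ g, ∀ f ∈ B, LeStar f g

def DominatingFam (D : Set (ℕ → ℕ)) : Prop := ∀ f, ∃ g ∈ D, LeStar f g

/-- The unbounding number 𝔟. -/
noncomputable def bNum : Cardinal := sInf {c | ∃ B, UnboundedFam B ∧ c = #B}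

/-- The dominating number 𝔡. -/
noncomputable def dNum : Cardinal := sInf {c | ∃ D, DominatingFam D ∧ c = #D}

def SplittingFam (S : Set (Set ℕ)) : Prop :=
  ∀ A : Set ℕ, A.Infinite → ∃ s ∈ S, (A ∩ s).Infinite ∧ (A \ s).Infinite

/-- The splitting number 𝔰. -/
noncomputable def sNum : Cardinal := sInf {c | ∃ S, SplittingFam S ∧ c = #S}

/-- `g` avoids middles in `X` with respect to `⟨R,S⟩`. -/
def AvoidsMiddles (R S : ℕ → ℕ → Prop) (g : ℕ → ℕ) (X : Set (ℕ → ℕ)) : Prop :=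
  (∀ f ∈ X, {n | R (f n) (g n)}.Infinite) ∧
  ∀ f ∈ X, ∀ h ∈ X,
    {n | R (f n) (g n) ∧ S (g n) (h n)}.Finite ∨
    {n | R (h n) (g n) ∧ S (g n) (f n)}.Finite

/-- The excluded middle property with respect to `⟨R,S⟩`. -/
def EMP (R S : ℕ → ℕ → Prop) (X : Set (ℕ → ℕ)) : Prop := ∃ g, AvoidsMiddles R S g X

/-- The cardinal 𝔵_{R,S}. -/
noncomputable def xNum (R S : ℕ → ℕ → Prop) : Cardinal :=
  sInf {c | ∃ X : Set (ℕ → ℕ), ¬ EMP R S X ∧ c = #X}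

/-- The class 𝔅 of bounded sets. -/
def ClB (Y : Set (ℕ → ℕ)) : Prop := ∃ g, ∀ f ∈ Y, LeStar f g

/-- The class 𝔛. -/
def ClX (Y : Set (ℕ → ℕ)) : Prop := EMP (· < ·) (· ≤ ·) Y

/-- `Y` is finitely dominating: `maxfin Y` is dominating. -/
def FinDominating (Y : Set (ℕ → ℕ)) : Prop :=
  ∀ f : ℕ → ℕ, ∃ F : Finset (ℕ → ℕ), ↑F ⊆ Y ∧ LeStar f (fun n => F.sup (fun h => h n))

/-- The class 𝔇fin of non finitely-dominating sets. -/
def ClDfin (Y : Set (ℕ → ℕ)) : Prop := ¬ FinDominating Y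

/-- The class 𝔇 of non-dominating sets. -/
def ClD (Y : Set (ℕ → ℕ)) : Prop := ¬ DominatingFam Y

/-- The additivity number add(I, J). -/
noncomputable def addNum (I J : Set (ℕ → ℕ) → Prop) : Cardinal :=
  sInf {c | ∃ Fam : Set (Set (ℕ → ℕ)), (∀ Y ∈ Fam, I Y) ∧ ¬ J (⋃₀ Fam) ∧ c = #Fam}

/-- The Boolean subalgebra of `P(ℕ)` generated by `F`. -/
def genBA (F : Set (Set ℕ)) : Set (Set ℕ) :=
  ⋂₀ {C | F ⊆ C ∧ Set.univ ∈ C ∧ (∀ A ∈ C, Aᶜ ∈ C) ∧ ∀ A ∈ C, ∀ B ∈ C, A ∩ B ∈ C}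

/-- A nonprincipal ultrafilter (every member is infinite). -/
def NonPrincipal (U : Ultrafilter ℕ) : Prop := ∀ S ∈ U, Set.Infinite S

/-- The cofinality of the reduced product `ℕ^ℕ/U`. -/
noncomputable def cofRP (U : Ultrafilter ℕ) : Cardinal :=
  sInf {c | ∃ C : Set (ℕ → ℕ), (∀ f : ℕ → ℕ, ∃ g ∈ C, {n | f n ≤ g n} ∈ U) ∧ c = #C}


/-- The cardinal 𝔨wt. -/
noncomputable def kwtNum : Cardinal :=
  sInf {c | ∃ F : Set (Set ℕ), Centered F ∧
    (¬∃ A : Set ℕ, A.Infinite ∧ (∀ B ∈ F, (B ∩ A).Infinite) ∧ LinQO ((· ∩ A) '' F)) ∧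
    c = #F}

lemma centered_infinite {F : Set (Set ℕ)} (hC : Centered F)
    (hnp : ¬∃ A, PseudoInt F A) : F.Infinite := by
  intro hfin
  rcases F.eq_empty_or_nonempty with hE | hne
  · exact hnp ⟨Set.univ, Set.infinite_univ, by simp [hE]⟩
  · have hsub : ↑hfin.toFinset ⊆ F := by simp
    have hne' : hfin.toFinset.Nonempty := by
      rwa [Set.Finite.toFinset_nonempty]
    have hinf := hC.2 hfin.toFinset hsub hne'
    refine hnp ⟨_, hinf, ?_⟩
    intro B hB
    have hBB : (⋂ A ∈ hfin.toFinset, A) ⊆ B :=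
      Set.iInter₂_subset B (hfin.mem_toFinset.mpr hB)
    show ((⋂ A ∈ hfin.toFinset, A) \ B).Finite
    rw [Set.diff_eq_empty.mpr hBB]
    exact Set.finite_empty

lemma kwt_witness {F : Set (Set ℕ)} (hC : Centered F) (hnp : ¬∃ A, PseudoInt F A) :
    ∃ G : Set (Set ℕ), Centered G ∧
      (¬∃ A : Set ℕ, A.Infinite ∧ (∀ B ∈ G, (B ∩ A).Infinite) ∧ LinQO ((· ∩ A) '' G)) ∧
      #G ≤ #F := by
  classical
  set G : Set (Set ℕ) := F ∪ (fun p : Set ℕ × Set ℕ => p.1ᶜ ∪ p.2) '' (F ×ˢ F) with hGdef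
  have hsub : ∀ E ∈ G, ∃ B ∈ F, B ⊆ E := by
    rintro E (hE | ⟨⟨B, C⟩, hBC, rfl⟩)
    · exact ⟨E, hE, subset_rfl⟩
    · exact ⟨C, hBC.2, Set.subset_union_right⟩
  have hCent : Centered G := by
    constructor
    · intro E hE
      obtain ⟨B, hB, hBE⟩ := hsub E hE
      exact (hC.1 B hB).mono hBE
    · intro s hs hne
      choose! r hrF hrsub using hsub
      have hFsub : ↑(s.image r) ⊆ F := by
        intro B hB
        rcases Finset.mem_image.mp (Finset.mem_coe.mp hB) with ⟨E, hE, rfl⟩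
        exact hrF E (hs hE)
      have hinf := hC.2 (s.image r) hFsub (hne.image r)
      refine hinf.mono ?_
      intro x hx
      simp only [Set.mem_iInter] at hx ⊢
      intro A hA
      exact hrsub A (hs hA) (hx (r A) (Finset.mem_image_of_mem r hA))
  have hNo : ¬∃ A : Set ℕ, A.Infinite ∧ (∀ B ∈ G, (B ∩ A).Infinite) ∧
      LinQO ((· ∩ A) '' G) := by
    rintro ⟨A, hAinf, htr, hlin⟩
    have h1 : ∃ B ∈ F, (A \ B).Infinite := by
      by_contra h
      push_neg at h
      exact hnp ⟨A, hAinf, fun B hB => h B hB⟩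
    obtain ⟨B', hB', hAB'⟩ := h1
    have htrB' : (B' ∩ A).Infinite := htr B' (Or.inl hB')
    have h2 : ∃ B'' ∈ F, ((B' ∩ A) \ B'').Infinite := by
      by_contra h
      push_neg at h
      exact hnp ⟨B' ∩ A, htrB', fun B hB => h B hB⟩
    obtain ⟨B'', hB'', hd⟩ := h2
    have hSG : (B'ᶜ ∪ B'') ∈ G := Or.inr ⟨(B', B''), ⟨hB', hB''⟩, rfl⟩
    rcases hlin ((B'ᶜ ∪ B'') ∩ A) ⟨_, hSG, rfl⟩ (B' ∩ A) ⟨B', Or.inl hB', rfl⟩ with h | h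
    · refine hAB' (Set.Finite.subset h ?_)
      intro x hx
      exact ⟨⟨Or.inl hx.2, hx.1⟩, fun hx' => hx.2 hx'.1⟩
    · refine hd (Set.Finite.subset h ?_)
      intro x hx
      refine ⟨hx.1, ?_⟩
      rintro ⟨hxS, -⟩
      rcases hxS with hxc | hx''
      · exact hxc hx.1.1
      · exact hx.2 hx''
  have hFinf : F.Infinite := centered_infinite hC hnp
  haveI := hFinf.to_subtype
  have h0 : Cardinal.aleph0 ≤ #F := Cardinal.aleph0_le_mk F
  have hprod : #(F ×ˢ F : Set (Set ℕ × Set ℕ)) = #F * #F := by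
    rw [Cardinal.mk_congr (Equiv.Set.prod F F), Cardinal.mk_prod]
    simp
  have hcard : #G ≤ #F := by
    calc #G ≤ #F + #((fun p : Set ℕ × Set ℕ => p.1ᶜ ∪ p.2) '' (F ×ˢ F)) :=
          Cardinal.mk_union_le _ _
      _ ≤ #F + #(F ×ˢ F : Set (Set ℕ × Set ℕ)) :=
          add_le_add le_rfl (Cardinal.mk_image_le)
      _ = #F + #F * #F := by rw [hprod]
      _ = #F := by rw [Cardinal.mul_eq_self h0, Cardinal.add_eq_self h0]
  exact ⟨G, hCent, hNo, hcard⟩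

lemma hyper_witness : ∃ F : Set (Set ℕ), Centered F ∧ ¬∃ A, PseudoInt F A := by
  refine ⟨{S : Set ℕ | S ∈ Filter.hyperfilter ℕ}, ⟨?_, ?_⟩, ?_⟩
  · intro S hS
    intro hfin
    exact Filter.notMem_hyperfilter_of_finite hfin hS
  · intro s hs hne
    have hmem : (⋂ A ∈ s, A) ∈ Filter.hyperfilter ℕ := by
      exact (Filter.biInter_finset_mem (s := fun A : Set ℕ => A) s).mpr fun A hA => hs hA
    intro hfin
    exact Filter.notMem_hyperfilter_of_finite hfin hmem
  · rintro ⟨A, hA, hps⟩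
    set e : ℕ ↪ ↥A := Set.Infinite.natEmbedding A hA with he
    set g : ℕ → ℕ := fun n => (e n : ℕ) with hg
    have hginj : Function.Injective g := by
      intro a b h
      exact e.injective (Subtype.ext h)
    have hgA : ∀ n, g n ∈ A := fun n => (e n).2
    set A0 : Set ℕ := Set.range (fun n => g (2 * n)) with hA0def
    have hA0 : A0.Infinite := Set.infinite_range_of_injective (fun a b h => by
      have := hginj h; omega)
    have hA0A : A0 ⊆ A := by rintro x ⟨n, rfl⟩; exact hgA _
    have hA1 : (A \ A0).Infinite := by
      have hsub1 : Set.range (fun n => g (2 * n + 1)) ⊆ A \ A0 := by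
        rintro x ⟨n, rfl⟩
        refine ⟨hgA _, ?_⟩
        rintro ⟨m, hm⟩
        have := hginj hm; omega
      exact (Set.infinite_range_of_injective (fun a b h => by
        have := hginj h; omega)).mono hsub1
    rcases (Filter.hyperfilter ℕ).mem_or_compl_mem A0 with h | h
    · exact hA1 (hps A0 h)
    · exact hA0 (Set.Finite.subset (hps A0ᶜ h)
        (fun x hx => ⟨hA0A hx, fun hc => hc hx⟩))

lemma kwt_trace_infinite {B A : Set ℕ} (hAinf : A.Infinite) (hfinAB : (A \ B).Finite) :
    (B ∩ A).Infinite := by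
  intro hfin
  have hsub : A ⊆ (B ∩ A) ∪ (A \ B) := by
    intro x hx
    by_cases hB : x ∈ B
    · exact Or.inl ⟨hB, hx⟩
    · exact Or.inr ⟨hx, hB⟩
  exact hAinf ((hfin.union hfinAB).subset hsub)

theorem stmt2 : pNum = kwtNum := by
  obtain ⟨F0, hC0, hnp0⟩ := hyper_witness
  obtain ⟨G0, hCG0, hnoG0, _⟩ := kwt_witness hC0 hnp0
  have hkne : {c | ∃ F : Set (Set ℕ), Centered F ∧
      (¬∃ A : Set ℕ, A.Infinite ∧ (∀ B ∈ F, (B ∩ A).Infinite) ∧ LinQO ((· ∩ A) '' F)) ∧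
      c = #F}.Nonempty := ⟨#G0, G0, hCG0, hnoG0, rfl⟩
  have hpne : {c | ∃ F : Set (Set ℕ), Centered F ∧ (¬∃ A, PseudoInt F A) ∧
      c = #F}.Nonempty := ⟨#F0, F0, hC0, hnp0, rfl⟩
  apply le_antisymm
  · -- pNum ≤ kwtNum : every kwt witness is a p witness
    refine csInf_le_csInf (OrderBot.bddBelow _) hkne ?_
    rintro c ⟨F, hC, hno, rfl⟩
    refine ⟨F, hC, ?_, rfl⟩
    rintro ⟨A, hps⟩
    refine hno ⟨A, hps.1, ?_, ?_⟩
    · exact fun B hB => kwt_trace_infinite hps.1 (hps.2 B hB)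
    · rintro X ⟨B, hB, rfl⟩ Y ⟨B', hB', rfl⟩
      left
      refine Set.Finite.subset (hps.2 B' hB') ?_
      intro x hx
      exact ⟨hx.1.2, fun hB'x => hx.2 ⟨hB'x, hx.1.2⟩⟩
  · -- kwtNum ≤ pNum
    have hmem := csInf_mem hpne
    obtain ⟨F, hC, hnp, hEq⟩ := hmem
    obtain ⟨G, hCG, hnoG, hle⟩ := kwt_witness hC hnp
    calc kwtNum ≤ #G := csInf_le (OrderBot.bddBelow _) ⟨G, hCG, hnoG, rfl⟩
      _ ≤ #F := hle
      _ = pNum := hEq.symm
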